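/- Let k ≥ 0 be an integer and let h ∈ D¹ with v_D(h − 1) ≥ 4k + 2 (D¹ acts on W = D by right multiplication). Then for every v ∈ Γ = O_E² and every w ∈ p^{−k}·(O_E + P_E^{−1}·δ): (i) χ(Tr_{E/F}(⟨v, v⟩ · conj(⟨w, w·c(h)⟩'))) = 1, where c(h) = (1 − h)(1 + h)^{−1} is the Cayley transform in D; and (ii) v ⊗ (w·c(h)) ∈ A. -/

import Mathlib

noncomputable section
open Matrix

/-- The image of `p` in `E`. -/
def pE (p : ℕ) [Fact p.Prime] (E : Type) [Field E] [Algebra ℚ_[p] E] : E :=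
  algebraMap ℚ_[p] E (p : ℚ_[p])

/-- The ring of integers `O_E = ℤ_p + ℤ_p·α` of the unramified quadratic extension
`E = F(α)`, as a set. -/
def OE (p : ℕ) [Fact p.Prime] (E : Type) [Field E] [Algebra ℚ_[p] E] (α : E) : Set E :=
  {x | ∃ a b : ℤ_[p],
    x = algebraMap ℚ_[p] E (a : ℚ_[p]) + algebraMap ℚ_[p] E (b : ℚ_[p]) * α}

/-- The element `x_{a,b} = !![a, b; p·conj b, conj a]` of the quaternion division algebra
`D ⊆ M₂(E)`. -/
def qmat (p : ℕ) [Fact p.Prime] (E : Type) [Field E] [Algebra ℚ_[p] E]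
    (conj : E → E) (a b : E) : Matrix (Fin 2) (Fin 2) E :=
  !![a, b; pE p E * conj b, conj a]

/-- The uniformizer `δ = x_{0,1}` of `D`, with `δ² = p`. -/
def deltaM (p : ℕ) [Fact p.Prime] (E : Type) [Field E] [Algebra ℚ_[p] E] :
    Matrix (Fin 2) (Fin 2) E :=
  !![0, 1; pE p E, 0]

/-- The maximal order `O_D = {x_{a,b} : a, b ∈ O_E}` of `D`, as a set. -/
def ODset (p : ℕ) [Fact p.Prime] (E : Type) [Field E] [Algebra ℚ_[p] E]
    (α : E) (conj : E → E) : Set (Matrix (Fin 2) (Fin 2) E) :=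
  {m | ∃ a b : E, a ∈ OE p E α ∧ b ∈ OE p E α ∧ m = qmat p E conj a b}

/-- The norm-one group `D¹ = {x ∈ D : det x = 1}`, as a set. -/
def D1set (p : ℕ) [Fact p.Prime] (E : Type) [Field E] [Algebra ℚ_[p] E]
    (conj : E → E) : Set (Matrix (Fin 2) (Fin 2) E) :=
  {m | (∃ a b : E, m = qmat p E conj a b) ∧ m.det = 1}

/-- `vDge p E α conj r m` says `v_D(m) ≥ r`, i.e. `m ∈ δ^r·O_D = P_D^r`. -/
def vDge (p : ℕ) [Fact p.Prime] (E : Type) [Field E] [Algebra ℚ_[p] E]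
    (α : E) (conj : E → E) (r : ℕ) (m : Matrix (Fin 2) (Fin 2) E) : Prop :=
  ∃ yy ∈ ODset p E α conj, m = deltaM p E ^ r * yy

/-- `x ∈ P_E = p·O_E`. -/
def inPE (p : ℕ) [Fact p.Prime] (E : Type) [Field E] [Algebra ℚ_[p] E]
    (α : E) (x : E) : Prop :=
  ∃ c ∈ OE p E α, x = pE p E * c

/-- The pure tensor `v ⊗ w ∈ 𝒲 = V ⊗_E W` in coordinates: `(v ⊗ w) i j = v i · conj (w j)`
(the `E`-structure on `W`-coordinates is twisted by conjugation, so that the symplectic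
form below is well defined on `𝒲`).  Here `w = (c, d)` stands for `c + d·δ ∈ W = D`. -/
def tens (E : Type) [Field E] (conj : E → E) (v w : Fin 2 → E) :
    Matrix (Fin 2) (Fin 2) E :=
  Matrix.of fun i j => v i * conj (w j)

/-- The symplectic form `⟨⟨x, y⟩⟩ = Tr_{E/F}(⟨v,v'⟩·conj(⟨w,w'⟩'))` of `𝒲`, written in the
coordinates above, with values `t + conj t` landing in (the image of) `F`. -/
def sympE (p : ℕ) [Fact p.Prime] (E : Type) [Field E] [Algebra ℚ_[p] E]
    (conj : E → E) (x y : Matrix (Fin 2) (Fin 2) E) : E :=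
  (x 0 0 * conj (y 1 0) - pE p E * (x 0 1 * conj (y 1 1))
      - x 1 0 * conj (y 0 0) + pE p E * (x 1 1 * conj (y 0 1)))
    + conj (x 0 0 * conj (y 1 0) - pE p E * (x 0 1 * conj (y 1 1))
      - x 1 0 * conj (y 0 0) + pE p E * (x 1 1 * conj (y 0 1)))

/-- The lattice `A = Γ ⊗ Γ'`: the `O_E`-span (= additive span) of the pure tensors
`v ⊗ w` with `v ∈ Γ = O_E²` and `w ∈ Γ' = O_E + O_E·δ`. -/
def Alat (p : ℕ) [Fact p.Prime] (E : Type) [Field E] [Algebra ℚ_[p] E]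
    (α : E) (conj : E → E) : AddSubgroup (Matrix (Fin 2) (Fin 2) E) :=
  AddSubgroup.closure
    {m | ∃ v w : Fin 2 → E, (∀ i, v i ∈ OE p E α) ∧ (∀ j, w j ∈ OE p E α) ∧
      m = tens E conj v w}

/-- `x` lies in (the image in `E` of) `ℤ_p`. -/
def integralF (p : ℕ) [Fact p.Prime] (E : Type) [Field E] [Algebra ℚ_[p] E]
    (x : E) : Prop :=
  ∃ s : ℤ_[p], x = algebraMap ℚ_[p] E ((s : ℚ_[p]))

/-- The dual lattice `L* = {z ∈ 𝒲 : ⟨⟨z, l⟩⟩ ∈ ℤ_p for all l ∈ L}`. -/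
def dualLat (p : ℕ) [Fact p.Prime] (E : Type) [Field E] [Algebra ℚ_[p] E]
    (α : E) (conj : E → E) (L : Set (Matrix (Fin 2) (Fin 2) E)) :
    Set (Matrix (Fin 2) (Fin 2) E) :=
  {zz | ∀ l ∈ L, integralF p E (sympE p E conj zz l)}

/-- The entrywise embedding `M₂(ℤ_p) → M₂(E)`. -/
def toE (p : ℕ) [Fact p.Prime] (E : Type) [Field E] [Algebra ℚ_[p] E]
    (m : Matrix (Fin 2) (Fin 2) ℤ_[p]) : Matrix (Fin 2) (Fin 2) E :=
  m.map fun t => algebraMap ℚ_[p] E (t : ℚ_[p])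

/-- The Cayley transform `c(m) = (1 - m)(1 + m)⁻¹`. -/
def cay {E : Type} [Field E] (m : Matrix (Fin 2) (Fin 2) E) : Matrix (Fin 2) (Fin 2) E :=
  (1 - m) * (1 + m)⁻¹

/-- The skew-Hermitian form `⟨x, y⟩ = x₁·conj y₂ - x₂·conj y₁` on `V = E²`. -/
def sesqV (E : Type) [Field E] (conj : E → E) (x y : Fin 2 → E) : E :=
  x 0 * conj (y 1) - x 1 * conj (y 0)

/-- `Tr_{E/F}(x) = x + conj x`, as an element of `E`. -/
def trEl (E : Type) [Field E] (conj : E → E) (x : E) : E := x + conj x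


variable (p : ℕ) [Fact p.Prime] (E : Type) [Field E] [Algebra ℚ_[p] E] (α : E)

section lems
variable {p E α}

lemma OE_coe (s : ℤ_[p]) : algebraMap ℚ_[p] E (s : ℚ_[p]) ∈ OE p E α :=
  ⟨s, 0, by simp⟩

lemma OE_one : (1 : E) ∈ OE p E α := ⟨1, 0, by simp⟩

lemma OE_add {x y : E} (hx : x ∈ OE p E α) (hy : y ∈ OE p E α) : x + y ∈ OE p E α := by
  obtain ⟨a, b, rfl⟩ := hx; obtain ⟨a', b', rfl⟩ := hy
  exact ⟨a + a', b + b', by push_cast [map_add]; ring⟩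

lemma OE_neg {x : E} (hx : x ∈ OE p E α) : -x ∈ OE p E α := by
  obtain ⟨a, b, rfl⟩ := hx
  exact ⟨-a, -b, by push_cast [map_neg]; ring⟩

lemma OE_sub {x y : E} (hx : x ∈ OE p E α) (hy : y ∈ OE p E α) : x - y ∈ OE p E α := by
  rw [sub_eq_add_neg]; exact OE_add hx (OE_neg hy)

lemma OE_mul {z : ℤ_[p]ˣ} (hα : α * α = algebraMap ℚ_[p] E ((z : ℤ_[p]) : ℚ_[p]))
    {x y : E} (hx : x ∈ OE p E α) (hy : y ∈ OE p E α) : x * y ∈ OE p E α := by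
  obtain ⟨a, b, rfl⟩ := hx; obtain ⟨a', b', rfl⟩ := hy
  refine ⟨a * a' + b * b' * z, a * b' + b * a', ?_⟩
  simp only [PadicInt.coe_add, PadicInt.coe_mul, map_add, _root_.map_mul]
  linear_combination (algebraMap ℚ_[p] E (b : ℚ_[p]) * algebraMap ℚ_[p] E (b' : ℚ_[p])) * hα

lemma OE_pE : pE p E ∈ OE p E α := ⟨(p : ℤ_[p]), 0, by simp [pE]⟩

lemma OE_pE_pow (n : ℕ) : pE p E ^ n ∈ OE p E α :=
  ⟨(p : ℤ_[p]) ^ n, 0, by push_cast [pE, map_pow]; simp⟩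

lemma conj_conj (hspan : ∀ x : E, ∃ a b : ℚ_[p],
      x = algebraMap ℚ_[p] E a + algebraMap ℚ_[p] E b * α)
    (conj : E →ₐ[ℚ_[p]] E) (hconj : conj α = -α) (x : E) : conj (conj x) = x := by
  obtain ⟨a, b, rfl⟩ := hspan x
  simp [map_add, _root_.map_mul, hconj, AlgHom.commutes]

lemma OE_conj (conj : E →ₐ[ℚ_[p]] E) (hconj : conj α = -α)
    {x : E} (hx : x ∈ OE p E α) : conj x ∈ OE p E α := by
  obtain ⟨a, b, rfl⟩ := hx
  refine ⟨a, -b, ?_⟩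
  push_cast [map_add, _root_.map_mul, hconj, AlgHom.commutes, map_neg]
  ring

lemma conj_pE (conj : E →ₐ[ℚ_[p]] E) : conj (pE p E) = pE p E := by
  simp [pE, AlgHom.commutes]

lemma conj_alg (conj : E →ₐ[ℚ_[p]] E) (t : ℚ_[p]) :
    conj (algebraMap ℚ_[p] E t) = algebraMap ℚ_[p] E t := AlgHom.commutes _ _

/-- norm form: (φa + φb α)·conj(...) = φ(a² - b² z) -/
lemma OE_norm {z : ℤ_[p]ˣ} (hα : α * α = algebraMap ℚ_[p] E ((z : ℤ_[p]) : ℚ_[p]))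
    (conj : E →ₐ[ℚ_[p]] E) (hconj : conj α = -α) (a b : ℤ_[p]) :
    (algebraMap ℚ_[p] E (a : ℚ_[p]) + algebraMap ℚ_[p] E (b : ℚ_[p]) * α)
      * conj (algebraMap ℚ_[p] E (a : ℚ_[p]) + algebraMap ℚ_[p] E (b : ℚ_[p]) * α)
      = algebraMap ℚ_[p] E ((a * a - b * b * z : ℤ_[p]) : ℚ_[p]) := by
  rw [map_add, _root_.map_mul, hconj, AlgHom.commutes, AlgHom.commutes]
  simp only [PadicInt.coe_sub, PadicInt.coe_mul, map_sub, _root_.map_mul]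
  linear_combination (-(algebraMap ℚ_[p] E (b : ℚ_[p]) * algebraMap ℚ_[p] E (b : ℚ_[p]))) * hα

lemma unit4 (hp : p ≠ 2) (s : ℤ_[p]) : IsUnit (4 + p * s : ℤ_[p]) := by
  rw [PadicInt.isUnit_iff]
  by_contra hn
  have hle := PadicInt.norm_le_one (4 + p * s : ℤ_[p])
  have hlt : ‖(4 + p * s : ℤ_[p])‖ < 1 := lt_of_le_of_ne hle hn
  rw [PadicInt.norm_lt_one_iff_dvd] at hlt
  have h4 : (p : ℤ_[p]) ∣ (4 : ℤ_[p]) := by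
    have : (4 : ℤ_[p]) = (4 + p * s) - p * s := by ring
    rw [this]; exact dvd_sub hlt (Dvd.intro s rfl)
  have : ‖((4 : ℤ) : ℤ_[p])‖ < 1 := by
    rw [PadicInt.norm_lt_one_iff_dvd]; exact_mod_cast h4
  rw [PadicInt.norm_int_lt_one_iff_dvd] at this
  have hpp := (Fact.out : p.Prime)
  have : (p : ℤ) ∣ ((4 : ℕ) : ℤ) := by exact_mod_cast this
  rw [Int.natCast_dvd_natCast] at this
  have h4 : (4 : ℕ) = 2 ^ 2 := by norm_num
  rw [h4] at this
  exact hp ((Nat.prime_dvd_prime_iff_eq hpp Nat.prime_two).mp (hpp.dvd_of_dvd_pow this))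

lemma qmat00 (conj : E → E) (A B : E) : qmat p E conj A B 0 0 = A := rfl
lemma qmat01 (conj : E → E) (A B : E) : qmat p E conj A B 0 1 = B := rfl

lemma qmat_mul (conj : E →ₐ[ℚ_[p]] E) (hcc : ∀ x, conj (conj x) = x) (A B A' B' : E) :
    qmat p E conj A B * qmat p E conj A' B'
      = qmat p E conj (A * A' + pE p E * (B * conj B')) (A * B' + B * conj A') := by
  ext i j
  fin_cases i <;> fin_cases j <;>
    simp [qmat, Matrix.mul_apply, Fin.sum_univ_two, map_add, _root_.map_mul, hcc,
      conj_pE conj] <;> ring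

lemma qmat_smul (conj : E →ₐ[ℚ_[p]] E) (t : ℚ_[p]) (A B : E) :
    algebraMap ℚ_[p] E t • qmat p E conj A B
      = qmat p E conj (algebraMap ℚ_[p] E t * A) (algebraMap ℚ_[p] E t * B) := by
  ext i j
  fin_cases i <;> fin_cases j <;>
    simp [qmat, _root_.map_mul, conj_alg conj] <;> ring

lemma qmat_add (conj : E →ₐ[ℚ_[p]] E) (A B A' B' : E) :
    qmat p E conj A B + qmat p E conj A' B' = qmat p E conj (A + A') (B + B') := by
  ext i j
  fin_cases i <;> fin_cases j <;> simp [qmat, map_add] <;> ring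

lemma one_eq_qmat (conj : E →ₐ[ℚ_[p]] E) :
    (1 : Matrix (Fin 2) (Fin 2) E) = qmat p E conj 1 0 := by
  ext i j
  fin_cases i <;> fin_cases j <;> simp [qmat, Matrix.one_apply]

lemma qmat_det (conj : E →ₐ[ℚ_[p]] E) (A B : E) :
    (qmat p E conj A B).det = A * conj A - pE p E * (B * conj B) := by
  simp [qmat, Matrix.det_fin_two_of]; ring

lemma deltaM_sq : deltaM p E ^ 2 = pE p E • (1 : Matrix (Fin 2) (Fin 2) E) := by
  ext i j
  fin_cases i <;> fin_cases j <;>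
    simp [deltaM, pow_two, Matrix.mul_apply, Fin.sum_univ_two, Matrix.one_apply]

lemma deltaM_pow (n : ℕ) :
    deltaM p E ^ (2 * n) = (pE p E ^ n) • (1 : Matrix (Fin 2) (Fin 2) E) := by
  rw [pow_mul, deltaM_sq, smul_pow, one_pow]

lemma qmat_neg (conj : E →ₐ[ℚ_[p]] E) (A B : E) :
    -qmat p E conj A B = qmat p E conj (-A) (-B) := by
  ext i j
  fin_cases i <;> fin_cases j <;> simp [qmat, map_neg] <;> ring

lemma cay_struct (hp : p ≠ 2) {z : ℤ_[p]ˣ}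
    (hα : α * α = algebraMap ℚ_[p] E ((z : ℤ_[p]) : ℚ_[p]))
    (conj : E →ₐ[ℚ_[p]] E) (hconj : conj α = -α)
    (hcc : ∀ x, conj (conj x) = x)
    (k : ℕ) (h : Matrix (Fin 2) (Fin 2) E)
    (hhv : vDge p E α conj (4 * k + 2) (h - 1)) :
    ∃ g₁ ∈ OE p E α, ∃ g₂ ∈ OE p E α,
      cay h = qmat p E conj (pE p E ^ (2 * k + 1) * g₁) (pE p E ^ (2 * k + 1) * g₂) := by
  obtain ⟨yy, ⟨a, b, ha, hb, rfl⟩, hm⟩ := hhv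
  set φ := algebraMap ℚ_[p] E with hφ
  set P : E := pE p E ^ (2 * k + 1) with hP
  have hPalg : P = φ (((p : ℤ_[p]) ^ (2 * k + 1) : ℤ_[p]) : ℚ_[p]) := by
    rw [hP, pE, ← map_pow]; push_cast [map_natCast]; simp [map_pow, map_natCast]
  have hPO : P ∈ OE p E α := OE_pE_pow _
  have h42 : (4 * k + 2) = 2 * (2 * k + 1) := by ring
  have hdm : deltaM p E ^ (4 * k + 2) = P • (1 : Matrix (Fin 2) (Fin 2) E) := by
    rw [h42, deltaM_pow]
  have hh : h = qmat p E conj (1 + P * a) (P * b) := by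
    have h1 : h = deltaM p E ^ (4 * k + 2) * qmat p E conj a b + 1 :=
      sub_eq_iff_eq_add.mp hm
    rw [h1, hdm, smul_mul_assoc, one_mul, hPalg, qmat_smul, one_eq_qmat (conj := conj),
      qmat_add, ← hPalg]
    have e1 : φ ((((p : ℤ_[p]) ^ (2 * k + 1) : ℤ_[p])) : ℚ_[p]) * a + 1 = 1 + P * a := by
      rw [← hPalg]; ring
    have e2 : φ ((((p : ℤ_[p]) ^ (2 * k + 1) : ℤ_[p])) : ℚ_[p]) * b + 0 = P * b := by
      rw [← hPalg]; ring
    rw [← hPalg] at e1 e2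
    rw [e1, e2]
  -- components of a and b
  obtain ⟨a₁, a₂, haab⟩ := ha
  obtain ⟨b₁, b₂, hbab⟩ := hb
  set A0 : E := 1 + (1 + P * a) with hA0
  set B0 : E := P * b with hB0
  have hA0O : A0 ∈ OE p E α := OE_add OE_one (OE_add OE_one (OE_mul hα hPO ⟨a₁, a₂, haab⟩))
  have hB0O : B0 ∈ OE p E α := OE_mul hα hPO ⟨b₁, b₂, hbab⟩
  set A₁ : ℤ_[p] := 2 + (p : ℤ_[p]) ^ (2 * k + 1) * a₁ with hA₁
  set A₂ : ℤ_[p] := (p : ℤ_[p]) ^ (2 * k + 1) * a₂ with hA₂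
  set B₁ : ℤ_[p] := (p : ℤ_[p]) ^ (2 * k + 1) * b₁ with hB₁
  set B₂ : ℤ_[p] := (p : ℤ_[p]) ^ (2 * k + 1) * b₂ with hB₂
  have hA0ab : A0 = φ (A₁ : ℚ_[p]) + φ (A₂ : ℚ_[p]) * α := by
    rw [hA0, haab, hA₁, hA₂, hPalg]
    have h2 : ((2 : ℤ_[p]) : ℚ_[p]) = 2 := by norm_cast
    push_cast [map_add, _root_.map_mul, map_pow, h2, map_ofNat]
    try simp [map_ofNat, map_natCast, map_pow]
    try ring
  have hB0ab : B0 = φ (B₁ : ℚ_[p]) + φ (B₂ : ℚ_[p]) * α := by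
    rw [hB0, hbab, hB₁, hB₂, hPalg]
    push_cast [map_add, _root_.map_mul, map_pow]
    try simp [map_ofNat, map_natCast, map_pow]
    try ring
  -- the determinant-like quantity
  set t : ℤ_[p] := (A₁ * A₁ - A₂ * A₂ * z) - p * (B₁ * B₁ - B₂ * B₂ * z) with hts
  have hdet : A0 * conj A0 - pE p E * (B0 * conj B0) = φ (t : ℚ_[p]) := by
    rw [hA0ab, hB0ab, OE_norm hα conj hconj, OE_norm hα conj hconj, hts, pE]
    push_cast [map_sub, _root_.map_mul]
    try simp [map_ofNat, map_natCast, map_pow]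
    try ring
  -- t is a unit
  have htu : IsUnit t := by
    have h4 : t = 4 + p * (4 * (p : ℤ_[p]) ^ (2 * k) * a₁
        + (p : ℤ_[p]) ^ (4 * k + 1) * (a₁ * a₁)
        - (p : ℤ_[p]) ^ (4 * k + 1) * (a₂ * a₂ * z)
        - (p : ℤ_[p]) ^ (4 * k + 2) * (b₁ * b₁ - b₂ * b₂ * z)) := by
      rw [hts, hA₁, hA₂, hB₁, hB₂]; ring
    rw [h4]; exact unit4 hp _
  obtain ⟨u, hu⟩ := htu
  set s' : ℤ_[p] := ((u⁻¹ : ℤ_[p]ˣ) : ℤ_[p]) with hs'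
  have hts1 : t * s' = 1 := by rw [← hu, hs']; exact_mod_cast u.mul_inv
  -- the inverse of 1 + h
  set M : Matrix (Fin 2) (Fin 2) E :=
    φ (s' : ℚ_[p]) • qmat p E conj (conj A0) (-B0) with hM
  have h1h : (1 : Matrix (Fin 2) (Fin 2) E) + h = qmat p E conj A0 B0 := by
    rw [hh, one_eq_qmat (conj := conj), qmat_add, hA0, hB0, zero_add]
  have hmul1 : (1 + h) * M = 1 := by
    rw [h1h, hM, Matrix.mul_smul, qmat_mul _ hcc]
    have e1 : A0 * conj A0 + pE p E * (B0 * conj (-B0)) = φ (t : ℚ_[p]) := by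
      rw [map_neg, ← hdet]; ring
    have e2 : A0 * (-B0) + B0 * conj (conj A0) = 0 := by rw [hcc]; ring
    rw [e1, e2, qmat_smul, mul_zero, ← _root_.map_mul, ← PadicInt.coe_mul,
      mul_comm s' t, hts1]
    simp [one_eq_qmat (conj := conj)]
  have hinv : (1 + h)⁻¹ = M := Matrix.inv_eq_right_inv hmul1
  -- 1 - h
  have h1mh : (1 : Matrix (Fin 2) (Fin 2) E) - h = qmat p E conj (-(P * a)) (-(P * b)) := by
    rw [hh, one_eq_qmat (conj := conj), sub_eq_add_neg, qmat_neg, qmat_add]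
    have e1 : (1 : E) + -(1 + P * a) = -(P * a) := by ring
    have e2 : (0 : E) + -(P * b) = -(P * b) := by ring
    rw [e1, e2]
  -- assemble
  refine ⟨φ (s' : ℚ_[p]) * (pE p E * (b * conj B0) - a * conj A0),
    OE_mul hα (OE_coe s') (OE_sub (OE_mul hα OE_pE (OE_mul hα ⟨b₁, b₂, hbab⟩
      (OE_conj conj hconj hB0O))) (OE_mul hα ⟨a₁, a₂, haab⟩ (OE_conj conj hconj hA0O))),
    φ (s' : ℚ_[p]) * (a * B0 - b * A0),
    OE_mul hα (OE_coe s') (OE_sub (OE_mul hα ⟨a₁, a₂, haab⟩ hB0O)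
      (OE_mul hα ⟨b₁, b₂, hbab⟩ hA0O)), ?_⟩
  rw [cay, hinv, h1mh, hM, Matrix.mul_smul, qmat_mul _ hcc, qmat_smul, hcc]
  have e1 : φ (s' : ℚ_[p]) * (-(P * a) * conj A0 + pE p E * (-(P * b) * conj (-B0)))
      = P * (φ (s' : ℚ_[p]) * (pE p E * (b * conj B0) - a * conj A0)) := by
    rw [map_neg]; ring
  have e2 : φ (s' : ℚ_[p]) * (-(P * a) * -B0 + -(P * b) * A0)
      = P * (φ (s' : ℚ_[p]) * (a * B0 - b * A0)) := by ring
  rw [e1, e2]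
end lems

/-- for `k ≥ 0` and `h ∈ D¹` with `v_D(h - 1) ≥ 4k + 2` (acting on `W = D` by
right multiplication), for every `v ∈ Γ = O_E²` and every `w = p^{-k}c + p^{-k-1}d·δ` with
`c, d ∈ O_E` (i.e. `w ∈ p^{-k}(O_E + P_E⁻¹δ)`):
(i) `χ(Tr_{E/F}(⟨v,v⟩·conj(⟨w, w·c(h)⟩'))) = 1` where `χ(t) = ψ(p·t)` and `c(h)` is the
Cayley transform in `D`; and (ii) `v ⊗ (w·c(h)) ∈ A`.  The `W = D`-coordinates of
`w·c(h) ∈ D` are the entries of its first matrix row. -/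
theorem stmt15 (p : ℕ) [Fact p.Prime] (hp : p ≠ 2)
    (z : ℤ_[p]ˣ) (hz : ¬ ∃ w : ℤ_[p], w * w = (z : ℤ_[p]))
    (E : Type) [Field E] [Algebra ℚ_[p] E] (α : E)
    (hα : α * α = algebraMap ℚ_[p] E ((z : ℤ_[p]) : ℚ_[p]))
    (hα0 : α ∉ Set.range (algebraMap ℚ_[p] E))
    (hspan : ∀ x : E, ∃ a b : ℚ_[p], x = algebraMap ℚ_[p] E a + algebraMap ℚ_[p] E b * α)
    (conj : E →ₐ[ℚ_[p]] E) (hconj : conj α = -α)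
    (TrF : E → ℚ_[p]) (hTrF : ∀ t : ℚ_[p], TrF (algebraMap ℚ_[p] E t) = t)
    (ψ : AddChar ℚ_[p] ℂˣ)
    (hψ1 : ∀ t : ℤ_[p], ψ ((p : ℚ_[p]) * (t : ℚ_[p])) = 1)
    (hψ2 : ∃ t : ℤ_[p], ψ ((t : ℚ_[p])) ≠ 1)
    (k : ℕ) (h : Matrix (Fin 2) (Fin 2) E)
    (hhD : h ∈ D1set p E conj) (hhv : vDge p E α conj (4 * k + 2) (h - 1))
    (v : Fin 2 → E) (hv : ∀ i, v i ∈ OE p E α)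
    (c d : E) (hc : c ∈ OE p E α) (hd : d ∈ OE p E α) :
    ψ ((p : ℚ_[p]) * TrF (trEl E conj
        (sesqV E conj v v
          * conj (((pE p E)⁻¹ ^ k * c)
              * conj ((qmat p E conj ((pE p E)⁻¹ ^ k * c) ((pE p E)⁻¹ ^ (k + 1) * d)
                  * cay h) 0 0)
            - pE p E * (((pE p E)⁻¹ ^ (k + 1) * d)
              * conj ((qmat p E conj ((pE p E)⁻¹ ^ k * c) ((pE p E)⁻¹ ^ (k + 1) * d)
                  * cay h) 0 1)))))) = 1 ∧
    tens E conj v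
        ![(qmat p E conj ((pE p E)⁻¹ ^ k * c) ((pE p E)⁻¹ ^ (k + 1) * d) * cay h) 0 0,
          (qmat p E conj ((pE p E)⁻¹ ^ k * c) ((pE p E)⁻¹ ^ (k + 1) * d) * cay h) 0 1]
      ∈ Alat p E α conj := by
  have hcc : ∀ x, conj (conj x) = x := conj_conj hspan conj hconj
  obtain ⟨g₁, hg₁, g₂, hg₂, hcay⟩ := cay_struct hp hα conj hconj hcc k h hhv
  have hpne : pE p E ≠ 0 := by
    have h1 : ((p : ℚ_[p])) ≠ 0 := by exact_mod_cast (Fact.out : p.Prime).ne_zero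
    simpa [pE] using (map_ne_zero (algebraMap ℚ_[p] E)).mpr h1
  set e₁ : E := c * g₁ + d * conj g₂ with he₁def
  set e₂ : E := pE p E * (c * g₂) + d * conj g₁ with he₂def
  have he₁ : e₁ ∈ OE p E α := OE_add (OE_mul hα hc hg₁) (OE_mul hα hd (OE_conj conj hconj hg₂))
  have he₂ : e₂ ∈ OE p E α := OE_add (OE_mul hα OE_pE (OE_mul hα hc hg₂))
    (OE_mul hα hd (OE_conj conj hconj hg₁))
  have hW00 : (qmat p E conj ((pE p E)⁻¹ ^ k * c) ((pE p E)⁻¹ ^ (k + 1) * d) * cay h) 0 0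
      = pE p E ^ (k + 1) * e₁ := by
    rw [hcay, qmat_mul _ hcc, qmat00, _root_.map_mul, map_pow, conj_pE, he₁def]
    simp only [inv_pow]
    field_simp
    ring
  have hW01 : (qmat p E conj ((pE p E)⁻¹ ^ k * c) ((pE p E)⁻¹ ^ (k + 1) * d) * cay h) 0 1
      = pE p E ^ k * e₂ := by
    rw [hcay, qmat_mul _ hcc, qmat01, _root_.map_mul, map_pow, conj_pE, he₂def]
    simp only [inv_pow]
    field_simp
    ring
  constructor
  · rw [hW00, hW01]
    have hgeq : ((pE p E)⁻¹ ^ k * c) * conj (pE p E ^ (k + 1) * e₁)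
        - pE p E * (((pE p E)⁻¹ ^ (k + 1) * d) * conj (pE p E ^ k * e₂))
        = pE p E * (c * conj e₁) - d * conj e₂ := by
      rw [_root_.map_mul, map_pow, conj_pE, _root_.map_mul, map_pow, conj_pE]
      simp only [inv_pow]
      field_simp
      ring
    rw [hgeq]
    have hgO : pE p E * (c * conj e₁) - d * conj e₂ ∈ OE p E α :=
      OE_sub (OE_mul hα OE_pE (OE_mul hα hc (OE_conj conj hconj he₁)))
        (OE_mul hα hd (OE_conj conj hconj he₂))
    have hsv : sesqV E conj v v ∈ OE p E α := by
      rw [sesqV]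
      exact OE_sub (OE_mul hα (hv 0) (OE_conj conj hconj (hv 1)))
        (OE_mul hα (hv 1) (OE_conj conj hconj (hv 0)))
    obtain ⟨x₁, x₂, hx⟩ := OE_mul hα hsv (OE_conj conj hconj hgO)
    rw [hx, trEl]
    have : conj (algebraMap ℚ_[p] E (x₁ : ℚ_[p]) + algebraMap ℚ_[p] E (x₂ : ℚ_[p]) * α)
        = algebraMap ℚ_[p] E (x₁ : ℚ_[p]) - algebraMap ℚ_[p] E (x₂ : ℚ_[p]) * α := by
      rw [map_add, _root_.map_mul, hconj, AlgHom.commutes, AlgHom.commutes]; ring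
    rw [this]
    have heq : (algebraMap ℚ_[p] E (x₁ : ℚ_[p]) + algebraMap ℚ_[p] E (x₂ : ℚ_[p]) * α)
        + (algebraMap ℚ_[p] E (x₁ : ℚ_[p]) - algebraMap ℚ_[p] E (x₂ : ℚ_[p]) * α)
        = algebraMap ℚ_[p] E ((x₁ + x₁ : ℤ_[p]) : ℚ_[p]) := by
      push_cast [map_add]
      ring
    rw [heq, hTrF]
    exact hψ1 (x₁ + x₁)
  · rw [hW00, hW01]
    apply AddSubgroup.subset_closure
    refine ⟨v, ![pE p E ^ (k + 1) * e₁, pE p E ^ k * e₂], hv, ?_, rfl⟩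
    intro j
    fin_cases j
    · exact OE_mul hα (OE_pE_pow _) he₁
    · exact OE_mul hα (OE_pE_pow _) he₂
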